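/- arXiv:1203.3051 — 2 statements merged into one kernel-verified Lean document; each statement's English description precedes it below -/
import Mathlib

section
/- Let X_1,…,X_k be voting rules and T a tie-breaking mechanism on a finite candidate set C. If at least one X_j satisfies the Condorcet loser criterion and T satisfies the Condorcet loser criterion, then the combined rule X_1+⋯+X_k satisfies the Condorcet loser criterion: for every S ⊆ C with at least two elements and every profile P on S having a Condorcet loser l ∈ S (i.e. N_P(z,l) > N_P(l,z) for every z ∈ S∖{l}), the combined rule does not elect l. -/
/-
Framework: a finite candidate set `C`. A vote on a nonempty `S ⊆ C` is a strict
linear order on `S`, encoded as a duplicate-free list enumerating `S` (earlier =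
more preferred); a profile on `S` is a finite list of such votes. A voting rule /
tie-breaking mechanism is a function assigning to every `(S, P)` a candidate,
required to lie in `S` when `S` is nonempty. The combined rule `X_1 + ⋯ + X_k`
(with tie-breaking `T`) is defined by the recursive run-off construction.
-/

variable {C : Type*}

/-- The type of (total) choice functions, used both for voting rules and
tie-breaking mechanisms. -/
abbrev Rule (C : Type*) := Finset C → List (List C) → C

/-- `R` is a genuine voting rule (or tie-breaking mechanism): it always picks a
member of the given nonempty candidate set. -/
def IsRule [DecidableEq C] (R : Rule C) : Prop := ∀ S P, S.Nonempty → R S P ∈ S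

/-- `v` is a vote on `S`: a strict linear order of the members of `S`. -/
def VoteOn [DecidableEq C] (S : Finset C) (v : List C) : Prop := v.Nodup ∧ v.toFinset = S

/-- `P` is a profile on `S`. -/
def ProfileOn [DecidableEq C] (S : Finset C) (P : List (List C)) : Prop := ∀ v ∈ P, VoteOn S v

/-- Restriction `P|_W` of a profile to a subset `W` of candidates. -/
def restrictProfile [DecidableEq C] (W : Finset C) (P : List (List C)) : List (List C) :=
  P.map fun v => v.filter (fun x => x ∈ W)

/-- The combined rule `X_0 + ⋯ + X_k` with tie-breaking mechanism `T`:
collect the set `W` of winners of the base rules; if `W` is a singleton, that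
candidate wins; if `W = S`, the tie-breaking mechanism decides; otherwise
recurse on `(W, P|_W)`. (The final `else` branch is unreachable for genuine
voting rules, since then `W ⊆ S` always holds.) -/
def combined [DecidableEq C] {k : ℕ} (X : Fin (k + 1) → Rule C) (T : Rule C) :
    Finset C → List (List C) → C
  | S, P =>
    let W : Finset C := Finset.image (fun j => X j S P) Finset.univ
    if W.card = 1 then X 0 S P
    else if W = S then T S P
    else if h : W ⊂ S then combined X T W (restrictProfile W P)
    else T S P
  termination_by S _ => S.card
  decreasing_by exact Finset.card_lt_card h

/-- `N P x y`: the number of votes in `P` ranking `x` above `y`. -/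
def pairN [DecidableEq C] (P : List (List C)) (x y : C) : ℕ :=
  (P.filter (fun v => v.idxOf x < v.idxOf y)).length

/-- `R` satisfies the Condorcet loser criterion: whenever a profile `P` on `S`
with `|S| ≥ 2` has a Condorcet loser `l ∈ S` (i.e. `N_P(z,l) > N_P(l,z)` for
every `z ∈ S \ {l}`), `R` does not elect `l`. -/
def CondorcetLoserCriterion [DecidableEq C] (R : Rule C) : Prop :=
  ∀ (S : Finset C) (P : List (List C)) (l : C),
    2 ≤ S.card → ProfileOn S P → l ∈ S →
    (∀ z ∈ S, z ≠ l → pairN P z l > pairN P l z) → R S P ≠ l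


private lemma indexOf_filter_lt_iff [DecidableEq C] (p : C → Bool) (v : List C) (hv : v.Nodup)
    (x y : C) (hx : x ∈ v) (hy : y ∈ v) (hpx : p x) (hpy : p y) :
    (v.filter p).idxOf x < (v.filter p).idxOf y ↔ v.idxOf x < v.idxOf y := by
  induction v with
  | nil => simp at hx
  | cons a t ih =>
    rcases List.nodup_cons.1 hv with ⟨hat, ht⟩
    by_cases hxy : x = y
    · simp [hxy]
    rcases eq_or_ne a x with rfl | hax
    · have hyt : y ∈ t := by
        rcases List.mem_cons.1 hy with h | h
        · exact absurd h.symm hxy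
        · exact h
      rw [List.filter_cons_of_pos hpx, List.idxOf_cons_self,
        List.idxOf_cons_self, List.idxOf_cons_ne _ hxy,
        List.idxOf_cons_ne _ hxy]
      simp
    rcases eq_or_ne a y with rfl | hay
    · rw [List.filter_cons_of_pos hpy, List.idxOf_cons_self,
        List.idxOf_cons_self, List.idxOf_cons_ne _ hax,
        List.idxOf_cons_ne _ hax]
      simp
    · have hxt : x ∈ t := by
        rcases List.mem_cons.1 hx with h | h
        · exact absurd h.symm hax
        · exact h
      have hyt : y ∈ t := by
        rcases List.mem_cons.1 hy with h | h
        · exact absurd h.symm hay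
        · exact h
      rw [List.idxOf_cons_ne _ hax, List.idxOf_cons_ne _ hay]
      by_cases hpa : p a
      · rw [List.filter_cons_of_pos hpa, List.idxOf_cons_ne _ hax,
          List.idxOf_cons_ne _ hay]
        simpa [Nat.succ_lt_succ_iff] using ih ht hxt hyt
      · rw [List.filter_cons_of_neg (by simpa using hpa)]
        simpa [Nat.succ_lt_succ_iff] using ih ht hxt hyt

private lemma profileOn_restrict [DecidableEq C] {W S : Finset C} (hWS : W ⊆ S)
    {P : List (List C)} (hP : ProfileOn S P) : ProfileOn W (restrictProfile W P) := by
  intro v hv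
  obtain ⟨u, hu, rfl⟩ := List.mem_map.1 hv
  obtain ⟨hnd, htf⟩ := hP u hu
  refine ⟨hnd.filter _, ?_⟩
  rw [List.toFinset_filter, htf]
  ext a
  simp only [Finset.mem_filter, decide_eq_true_eq]
  exact ⟨fun h => h.2, fun h => ⟨hWS h, h⟩⟩

private lemma pairN_restrict [DecidableEq C] {W S : Finset C} (hWS : W ⊆ S)
    {P : List (List C)} (hP : ProfileOn S P) {x y : C} (hx : x ∈ W) (hy : y ∈ W) :
    pairN (restrictProfile W P) x y = pairN P x y := by
  unfold pairN restrictProfile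
  rw [List.filter_map, List.length_map]
  congr 1
  apply List.filter_congr
  intro v hv
  obtain ⟨hnd, htf⟩ := hP v hv
  have hxv : x ∈ v := by rw [← List.mem_toFinset, htf]; exact hWS hx
  have hyv : y ∈ v := by rw [← List.mem_toFinset, htf]; exact hWS hy
  simp only [Function.comp_apply, decide_eq_decide]
  exact indexOf_filter_lt_iff _ v hnd x y hxv hyv (by simpa using hx) (by simpa using hy)

private lemma combined_isRule [DecidableEq C] {k : ℕ} (X : Fin (k + 1) → Rule C) (T : Rule C)
    (hX : ∀ j, IsRule (X j)) (hT : IsRule T) : IsRule (combined X T) := by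
  intro S
  induction S using Finset.strongInduction with
  | _ S ih =>
    intro P hS
    rw [combined]
    set W : Finset C := Finset.image (fun j => X j S P) Finset.univ with hWdef
    have hW0 : X 0 S P ∈ W := Finset.mem_image_of_mem _ (Finset.mem_univ 0)
    split_ifs with h1 h2 h3
    · exact hX 0 S P hS
    · exact hT S P hS
    · exact h3.subset (ih W h3 (restrictProfile W P) ⟨_, hW0⟩)
    · exact hT S P hS

/-- If at least one of the base voting rules satisfies the Condorcet loser
criterion and the tie-breaking mechanism satisfies the Condorcet loser
criterion, then the combined rule `X_0 + ⋯ + X_k` satisfies the Condorcet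
loser criterion. -/
theorem combined_condorcet_loser [DecidableEq C] [Fintype C] {k : ℕ}
    (X : Fin (k + 1) → Rule C) (T : Rule C)
    (hX : ∀ j, IsRule (X j)) (hT : IsRule T)
    (hC : ∃ j, CondorcetLoserCriterion (X j)) (hTC : CondorcetLoserCriterion T) :
    CondorcetLoserCriterion (combined X T) := by
  obtain ⟨j, hj⟩ := hC
  intro S
  induction S using Finset.strongInduction with
  | _ S ih =>
    intro P l h2 hP hl hloser
    rw [combined]
    set W : Finset C := Finset.image (fun i => X i S P) Finset.univ with hWdef
    have hW0 : X 0 S P ∈ W := Finset.mem_image_of_mem _ (Finset.mem_univ 0)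
    have hWj : X j S P ∈ W := Finset.mem_image_of_mem _ (Finset.mem_univ j)
    have hjne : X j S P ≠ l := hj S P l h2 hP hl hloser
    split_ifs with h1 h2' h3
    · obtain ⟨a, ha⟩ := Finset.card_eq_one.1 h1
      rw [ha, Finset.mem_singleton] at hW0 hWj
      rw [hW0, ← hWj]
      exact hjne
    · exact hTC S P l h2 hP hl hloser
    · by_cases hlW : l ∈ W
      · have hcard : 2 ≤ W.card := by
          have : 1 ≤ W.card := Finset.card_pos.2 ⟨_, hW0⟩
          omega
        refine ih W h3 (restrictProfile W P) l hcard
          (profileOn_restrict h3.subset hP) hlW ?_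
        intro z hz hzl
        rw [pairN_restrict h3.subset hP hz hlW, pairN_restrict h3.subset hP hlW hz]
        exact hloser z (h3.subset hz) hzl
      · intro hcontra
        exact hlW (hcontra ▸ combined_isRule X T hX hT W (restrictProfile W P) ⟨_, hW0⟩)
    · exact hTC S P l h2 hP hl hloser
end

section
/- Let K and k_1,…,k_t be positive integers with k_1+⋯+k_t = 2K. On the candidate set {a,b,c} with tie-breaking order c ≻ a ≻ b, let P be the weighted profile consisting of weight 6K of the vote b≻c≻a, weight 2K of a≻b≻c, and weight 2K of a≻c≻b, and let there be t manipulators where manipulator i casts one vote of weight 2k_i. Consider the runoff combination maximin+plurality. Then there exists a choice of manipulator votes making c the maximin+plurality winner of the combined weighted profile if and only if there exists S ⊆ {1,…,t} with Σ_{i∈S} k_i = K. -/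
/-
Weighted voting on the three-candidate set {a, b, c}. A weighted profile is a
finite list of pairs (vote, weight), where a vote is a duplicate-free list of
all three candidates (earlier = more preferred) and the weight is a positive
natural number. `T` always denotes the tie-breaking (strict linear) order.
-/

inductive Cand : Type
  | a | b | c
  deriving DecidableEq

instance : Fintype Cand :=
  ⟨{Cand.a, Cand.b, Cand.c}, fun x => by cases x <;> simp⟩

/-- A weighted profile: a list of (vote, weight) pairs. -/
abbrev WProfile := List (List Cand × ℕ)

/-- The total weight `n` of a weighted profile. -/
def totalW (P : WProfile) : ℕ := (P.map Prod.snd).sum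

/-- `N P x y`: the total weight of votes in `P` ranking `x` above `y`. -/
def Nw (P : WProfile) (x y : Cand) : ℕ :=
  ((P.filter fun p => p.1.idxOf x < p.1.idxOf y).map Prod.snd).sum

/-- The `k`-approval score of `e`: the total weight of votes ranking `e`
among the top `k` positions. -/
def kApproval (P : WProfile) (k : ℕ) (e : Cand) : ℕ :=
  ((P.filter fun p => p.1.idxOf e < k).map Prod.snd).sum

/-- The Bucklin score of `e`: the least `k` such that the `k`-approval score
of `e` is strictly greater than half the total weight. -/
noncomputable def bucklinScore (P : WProfile) (e : Cand) : ℕ :=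
  sInf {k | totalW P < 2 * kApproval P k e}

/-- `v` is a vote: a strict linear order of all three candidates. -/
def ValidVote (v : List Cand) : Prop := v.Nodup ∧ v.toFinset = Finset.univ

/-- A valid weighted profile: every vote is a linear order and every weight is
positive. -/
def ValidWProfile (P : WProfile) : Prop := ∀ p ∈ P, ValidVote p.1 ∧ 0 < p.2

/-- The `T`-greatest candidate among the maximisers of `f`. -/
def argmaxT (T : LinearOrder Cand) (f : Cand → ℕ) : Cand :=
  @Finset.max' Cand T (Finset.univ.filter fun e => ∀ z, f z ≤ f e) (by
    obtain ⟨w, hw, hm⟩ := Finset.exists_max_image Finset.univ f ⟨Cand.a, Finset.mem_univ _⟩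
    exact ⟨w, Finset.mem_filter.2 ⟨Finset.mem_univ _, fun z => hm z (Finset.mem_univ _)⟩⟩)

/-- The `T`-greatest candidate among the minimisers of `f`. -/
def argminT (T : LinearOrder Cand) (f : Cand → ℕ) : Cand :=
  @Finset.max' Cand T (Finset.univ.filter fun e => ∀ z, f e ≤ f z) (by
    obtain ⟨w, hw, hm⟩ := Finset.exists_min_image Finset.univ f ⟨Cand.a, Finset.mem_univ _⟩
    exact ⟨w, Finset.mem_filter.2 ⟨Finset.mem_univ _, fun z => hm z (Finset.mem_univ _)⟩⟩)

/-- The plurality score of `e`: the total weight of votes ranking `e` first. -/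
def pluralityScore (P : WProfile) (e : Cand) : ℕ :=
  ((P.filter fun p => p.1.head? = some e).map Prod.snd).sum

/-- The plurality winner. -/
def pluralityWinner (T : LinearOrder Cand) (P : WProfile) : Cand :=
  argmaxT T (pluralityScore P)

/-- The Copeland score of `x`: the number of candidates `z ≠ x` with
`N(x,z) > N(z,x)`. -/
def copelandScore (P : WProfile) (x : Cand) : ℕ :=
  (Finset.univ.filter fun z => z ≠ x ∧ Nw P z x < Nw P x z).card

/-- The Copeland winner. -/
def copelandWinner (T : LinearOrder Cand) (P : WProfile) : Cand :=
  argmaxT T (copelandScore P)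

/-- The maximin score of `x`: the minimum of `N(x,z)` over `z ≠ x`. -/
def maximinScore (P : WProfile) (x : Cand) : ℕ :=
  (((Finset.univ : Finset Cand).erase x).image fun z => Nw P x z).min' (by
    apply Finset.Nonempty.image
    cases x <;> decide)

/-- The maximin winner. -/
def maximinWinner (T : LinearOrder Cand) (P : WProfile) : Cand :=
  argmaxT T (maximinScore P)

/-- The Bucklin winner: the `T`-greatest candidate of minimal Bucklin score. -/
noncomputable def bucklinWinner (T : LinearOrder Cand) (P : WProfile) : Cand :=
  argminT T (bucklinScore P)

/-- Winner of the pairwise contest between `x` and `z` (the `T`-greater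
candidate winning on a tie). -/
def pairWin (T : LinearOrder Cand) (P : WProfile) (x z : Cand) : Cand :=
  if Nw P z x < Nw P x z then x
  else if Nw P x z < Nw P z x then z
  else if T.lt x z then z else x

/-- The candidate other than the two (distinct) given ones. -/
def third (x y : Cand) : Cand :=
  if Cand.a ≠ x ∧ Cand.a ≠ y then Cand.a
  else if Cand.b ≠ x ∧ Cand.b ≠ y then Cand.b
  else Cand.c

/-- The cup winner for the agenda in which `p` and `q` meet first and the
winner then meets the remaining candidate. -/
def cupWinner (T : LinearOrder Cand) (p q : Cand) (P : WProfile) : Cand :=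
  pairWin T P (pairWin T P p q) (third p q)

/-- Run-off combination `X + Y`: the common winner if `X` and `Y` agree;
otherwise the pairwise-majority winner between the two winners, with the
`T`-greater candidate winning a tied run-off. -/
def runoffWinner (T : LinearOrder Cand) (X Y : WProfile → Cand) (P : WProfile) : Cand :=
  let x := X P
  let y := Y P
  if x = y then x
  else if Nw P y x < Nw P x y then x
  else if Nw P x y < Nw P y x then y
  else if T.lt x y then y else x

/-- Tie-breaking priority realising the order c ≻ a ≻ b. -/
def prio : Cand → ℕ
  | .a => 1
  | .b => 0
  | .c => 2

/-- The tie-breaking order c ≻ a ≻ b. -/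
def Tcab : LinearOrder Cand := LinearOrder.lift' prio (by decide)

/-- The non-manipulators' profile: weight 6K of b≻c≻a, 2K of a≻b≻c and
2K of a≻c≻b. -/
def P16 (K : ℕ) : WProfile :=
  [([Cand.b, Cand.c, Cand.a], 6 * K), ([Cand.a, Cand.b, Cand.c], 2 * K),
   ([Cand.a, Cand.c, Cand.b], 2 * K)]

open Cand Finset in
lemma valid_cases {v : List Cand} (h : ValidVote v) :
    v = [a,b,c] ∨ v = [a,c,b] ∨ v = [b,a,c] ∨ v = [b,c,a] ∨ v = [c,a,b] ∨ v = [c,b,a] := by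
  obtain ⟨hnd, huniv⟩ := h
  have hlen : v.length = 3 := by
    have h1 := List.toFinset_card_of_nodup hnd
    rw [huniv] at h1
    simpa [show Fintype.card Cand = 3 from by decide] using h1.symm
  match v, hlen with
  | [x, y, z], _ => cases x <;> cases y <;> cases z <;> simp_all

lemma filter_sum (p : List Cand × ℕ → Bool) (l : WProfile) :
    ((l.filter p).map Prod.snd).sum = (l.map fun q => if p q then q.2 else 0).sum := by
  induction l with
  | nil => rfl
  | cons h t ih => by_cases hp : p h <;> simp [hp, ih]

lemma Nw_append (P Q : WProfile) (x y : Cand) : Nw (P++Q) x y = Nw P x y + Nw Q x y := by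
  simp [Nw, List.filter_append]

lemma plur_append (P Q : WProfile) (e : Cand) :
    pluralityScore (P++Q) e = pluralityScore P e + pluralityScore Q e := by
  simp [pluralityScore, List.filter_append]

lemma Nw_ofFn {t : ℕ} (f : Fin t → List Cand × ℕ) (x y : Cand) :
    Nw (List.ofFn f) x y = ∑ i, if (f i).1.idxOf x < (f i).1.idxOf y then (f i).2 else 0 := by
  simp [Nw, filter_sum, List.map_ofFn, List.sum_ofFn]

lemma plur_ofFn {t : ℕ} (f : Fin t → List Cand × ℕ) (e : Cand) :
    pluralityScore (List.ofFn f) e = ∑ i, if (f i).1.head? = some e then (f i).2 else 0 := by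
  simp [pluralityScore, filter_sum, List.map_ofFn, List.sum_ofFn]

example (K : ℕ) : Nw (P16 K) Cand.a Cand.b = 4*K := by simp [Nw, P16]; ring
example (K : ℕ) : Nw (P16 K) Cand.b Cand.a = 6*K := by simp [Nw, P16]
example (K : ℕ) : Nw (P16 K) Cand.c Cand.a = 6*K := by simp [Nw, P16]
example (K : ℕ) : Nw (P16 K) Cand.a Cand.c = 4*K := by simp [Nw, P16]; ring
example (K : ℕ) : Nw (P16 K) Cand.b Cand.c = 8*K := by simp [Nw, P16]; ring
example (K : ℕ) : Nw (P16 K) Cand.c Cand.b = 2*K := by simp [Nw, P16]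
example (K : ℕ) : pluralityScore (P16 K) Cand.a = 4*K := by simp [pluralityScore, P16]; ring
example (K : ℕ) : pluralityScore (P16 K) Cand.b = 6*K := by simp [pluralityScore, P16]
example (K : ℕ) : pluralityScore (P16 K) Cand.c = 0 := by simp [pluralityScore, P16]

lemma argmaxT_spec (T : LinearOrder Cand) (f : Cand → ℕ) (z : Cand) : f z ≤ f (argmaxT T f) := by
  have h : argmaxT T f ∈ Finset.univ.filter fun e => ∀ z, f z ≤ f e := Finset.max'_mem _ _
  exact (Finset.mem_filter.1 h).2 z

lemma argmaxT_c (f : Cand → ℕ) (h1 : f Cand.a ≤ f Cand.c) (h2 : f Cand.b ≤ f Cand.c) :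
    argmaxT Tcab f = Cand.c := by
  have hc : Cand.c ∈ Finset.univ.filter fun e => ∀ z, f z ≤ f e :=
    Finset.mem_filter.2 ⟨Finset.mem_univ _, fun z => by cases z <;> simp [h1, h2]⟩
  have hle := @Finset.le_max' Cand Tcab _ Cand.c hc
  have htop : ∀ x, Tcab.le x Cand.c := by
    intro x
    letI := Tcab
    cases x <;> decide
  exact Tcab.le_antisymm _ _ (htop _) hle

lemma le_argmaxT (T : LinearOrder Cand) (f : Cand → ℕ) (z : Cand) (hz : ∀ w, f w ≤ f z) :
    T.le z (argmaxT T f) :=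
  @Finset.le_max' Cand T _ z (Finset.mem_filter.2 ⟨Finset.mem_univ _, hz⟩)

lemma argmaxT_a (f : Cand → ℕ) (h1 : f Cand.b ≤ f Cand.a) (h2 : f Cand.c < f Cand.a) :
    argmaxT Tcab f = Cand.a := by
  have hle := le_argmaxT Tcab f Cand.a (fun w => by cases w <;> simp [h1, le_of_lt h2])
  have hmax := argmaxT_spec Tcab f Cand.a
  cases hm : argmaxT Tcab f with
  | a => rfl
  | b => rw [hm] at hle; exact absurd hle (by letI := Tcab; decide)
  | c => rw [hm] at hmax; exact absurd hmax (not_le.2 h2)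

lemma min'_pair (x y : ℕ) (h : ({x, y} : Finset ℕ).Nonempty) : ({x, y} : Finset ℕ).min' h = min x y := by
  apply le_antisymm
  · exact le_min (Finset.min'_le _ _ (by simp)) (Finset.min'_le _ _ (by simp))
  · apply Finset.le_min'
    intro z hz
    simp only [Finset.mem_insert, Finset.mem_singleton] at hz
    rcases hz with rfl | rfl
    exacts [min_le_left _ _, min_le_right _ _]

lemma maximin_a (P : WProfile) : maximinScore P Cand.a = min (Nw P Cand.a Cand.b) (Nw P Cand.a Cand.c) := by
  have he : ((Finset.univ : Finset Cand).erase Cand.a) = {Cand.b, Cand.c} := by decide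
  simp only [maximinScore, he, Finset.image_insert, Finset.image_singleton, min'_pair]

lemma maximin_b (P : WProfile) : maximinScore P Cand.b = min (Nw P Cand.b Cand.a) (Nw P Cand.b Cand.c) := by
  have he : ((Finset.univ : Finset Cand).erase Cand.b) = {Cand.a, Cand.c} := by decide
  simp only [maximinScore, he, Finset.image_insert, Finset.image_singleton, min'_pair]

lemma maximin_c (P : WProfile) : maximinScore P Cand.c = min (Nw P Cand.c Cand.a) (Nw P Cand.c Cand.b) := by
  have he : ((Finset.univ : Finset Cand).erase Cand.c) = {Cand.a, Cand.b} := by decide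
  simp only [maximinScore, he, Finset.image_insert, Finset.image_singleton, min'_pair]

lemma runoff_mem (T : LinearOrder Cand) (X Y : WProfile → Cand) (P : WProfile) :
    runoffWinner T X Y P = X P ∨ runoffWinner T X Y P = Y P := by
  rw [runoffWinner]
  split_ifs <;> tauto

lemma runoff_snd (T : LinearOrder Cand) (X Y : WProfile → Cand) (P : WProfile)
    (hne : X P ≠ Y P) (hlt : Nw P (X P) (Y P) < Nw P (Y P) (X P)) :
    runoffWinner T X Y P = Y P := by
  rw [runoffWinner]
  rw [if_neg hne, if_neg (by omega), if_pos hlt]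

lemma NwP16_ab (K : ℕ) : Nw (P16 K) Cand.a Cand.b = 4*K := by simp [Nw, P16] <;> omega
lemma NwP16_ba (K : ℕ) : Nw (P16 K) Cand.b Cand.a = 6*K := by simp [Nw, P16]
lemma NwP16_ac (K : ℕ) : Nw (P16 K) Cand.a Cand.c = 4*K := by simp [Nw, P16] <;> omega
lemma NwP16_ca (K : ℕ) : Nw (P16 K) Cand.c Cand.a = 6*K := by simp [Nw, P16]
lemma NwP16_bc (K : ℕ) : Nw (P16 K) Cand.b Cand.c = 8*K := by simp [Nw, P16] <;> omega
lemma NwP16_cb (K : ℕ) : Nw (P16 K) Cand.c Cand.b = 2*K := by simp [Nw, P16]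
lemma plP16_a (K : ℕ) : pluralityScore (P16 K) Cand.a = 4*K := by simp [pluralityScore, P16] <;> omega
lemma plP16_b (K : ℕ) : pluralityScore (P16 K) Cand.b = 6*K := by simp [pluralityScore, P16]
lemma plP16_c (K : ℕ) : pluralityScore (P16 K) Cand.c = 0 := by simp [pluralityScore, P16]


open Cand

/-- Reduction from PARTITION to manipulating `maximin + plurality`
(tie-breaking c ≻ a ≻ b): manipulators with weights `2k₁, …, 2k_t` (where
`k₁ + ⋯ + k_t = 2K`) can make `c` win iff the `kᵢ` can be partitioned into
two halves summing to `K`. -/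
theorem maximin_plurality_partition
    (K : ℕ) (hK : 0 < K) (t : ℕ) (k : Fin t → ℕ)
    (hk : ∀ i, 0 < k i) (hsum : ∑ i, k i = 2 * K) :
    (∃ v : Fin t → List Cand, (∀ i, ValidVote (v i)) ∧
        runoffWinner Tcab (maximinWinner Tcab) (pluralityWinner Tcab)
          (P16 K ++ List.ofFn fun i => (v i, 2 * k i)) = Cand.c) ↔
    (∃ S : Finset (Fin t), ∑ i ∈ S, k i = K) := by
  constructor
  · rintro ⟨v, hv, hwin⟩

    set Q : WProfile := P16 K ++ List.ofFn fun i => (v i, 2 * k i) with hQ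
    set W : Cand → Cand → ℕ :=
      fun x y => ∑ i, if (v i).idxOf x < (v i).idxOf y then 2 * k i else 0 with hWdef
    set Pl : Cand → ℕ := fun e => ∑ i, if (v i).head? = some e then 2 * k i else 0 with hPldef
    have keyN : ∀ x y, Nw Q x y = Nw (P16 K) x y + W x y := by
      intro x y; rw [hQ, Nw_append, Nw_ofFn]
    have keyP : ∀ e, pluralityScore Q e = pluralityScore (P16 K) e + Pl e := by
      intro e; rw [hQ, plur_append, plur_ofFn]
    have htot : ∑ i, 2 * k i = 4 * K := by rw [← Finset.mul_sum, hsum]; ring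
    have hpair : ∀ x y : Cand, x ≠ y → W x y + W y x = 4 * K := by
      intro x y hxy
      rw [hWdef, ← Finset.sum_add_distrib, ← htot]
      refine Finset.sum_congr rfl fun i _ => ?_
      rcases valid_cases (hv i) with h|h|h|h|h|h <;> rw [h] <;> cases x <;> cases y <;> simp_all
    -- plurality winner is not c
    have hyc : pluralityWinner Tcab Q ≠ Cand.c := by
      intro hy
      have hspec := argmaxT_spec Tcab (pluralityScore Q) Cand.b
      have hy' : argmaxT Tcab (pluralityScore Q) = Cand.c := hy
      rw [hy', keyP, keyP, plP16_b, plP16_c] at hspec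
      have hPc : Pl Cand.c ≤ 4 * K := by
        rw [hPldef, ← htot]
        exact Finset.sum_le_sum fun i _ => by split <;> omega
      omega
    -- maximin winner is c
    have hxc : maximinWinner Tcab Q = Cand.c := by
      rcases runoff_mem Tcab (maximinWinner Tcab) (pluralityWinner Tcab) Q with h | h <;>
        rw [hwin] at h
      · exact h.symm
      · exact absurd h.symm hyc
    -- maximin consequences
    have hmaxb := argmaxT_spec Tcab (maximinScore Q) Cand.b
    have hmaxa := argmaxT_spec Tcab (maximinScore Q) Cand.a
    have hxc' : argmaxT Tcab (maximinScore Q) = Cand.c := hxc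
    rw [hxc', maximin_b, maximin_c, keyN, keyN, keyN, keyN,
        NwP16_ba, NwP16_bc, NwP16_ca, NwP16_cb] at hmaxb
    rw [hxc', maximin_a, maximin_c, keyN, keyN, keyN, keyN,
        NwP16_ab, NwP16_ac, NwP16_ca, NwP16_cb] at hmaxa
    have hcbbc := hpair Cand.c Cand.b (by decide)
    have habba := hpair Cand.a Cand.b (by decide)
    have hacca := hpair Cand.a Cand.c (by decide)
    have hWcb : W Cand.c Cand.b = 4 * K := by omega
    have hWab : W Cand.a Cand.b = 4 * K := by omega
    have hWac : W Cand.a Cand.c ≤ 2 * K := by omega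
    -- pointwise: every vote ranks c above b and a above b
    have hptw : ∀ x y : Cand, W x y = 4 * K → ∀ i, (v i).idxOf x < (v i).idxOf y := by
      intro x y hW4 i
      have hle : ∀ j ∈ Finset.univ, (if (v j).idxOf x < (v j).idxOf y then 2 * k j else 0) ≤ 2 * k j :=
        fun j _ => by split <;> omega
      have hsum4 : (∑ j, if (v j).idxOf x < (v j).idxOf y then 2 * k j else 0) = ∑ j, 2 * k j := by
        show W x y = _
        omega
      have heq := (Finset.sum_eq_sum_iff_of_le hle).1 hsum4 i (Finset.mem_univ i)
      have := hk i
      by_contra hcon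
      rw [if_neg hcon] at heq
      omega
    have hcb_pt := hptw Cand.c Cand.b hWcb
    have hab_pt := hptw Cand.a Cand.b hWab
    have hvote : ∀ i, v i = [a, c, b] ∨ v i = [c, a, b] := by
      intro i
      have h1 := hcb_pt i
      have h2 := hab_pt i
      rcases valid_cases (hv i) with h|h|h|h|h|h <;> rw [h] at h1 h2 <;>
        first
          | exact Or.inl h
          | exact Or.inr h
          | (exfalso; revert h1; decide)
          | (exfalso; revert h2; decide)
    -- plurality winner must be a
    have hNcb : Nw Q Cand.c Cand.b = 6 * K := by rw [keyN, NwP16_cb]; omega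
    have hNbc : Nw Q Cand.b Cand.c = 8 * K := by rw [keyN, NwP16_bc]; omega
    have hya : pluralityWinner Tcab Q = Cand.a := by
      cases hy : pluralityWinner Tcab Q with
      | a => rfl
      | c => exact absurd hy hyc
      | b =>
        have h2 := runoff_snd Tcab (maximinWinner Tcab) (pluralityWinner Tcab) Q
          (by rw [hxc, hy]; decide) (by rw [hxc, hy, hNcb, hNbc]; omega)
        rw [hwin, hy] at h2
        exact absurd h2 (by decide)
    -- plurality consequences
    have hpla := argmaxT_spec Tcab (pluralityScore Q) Cand.b
    have hya' : argmaxT Tcab (pluralityScore Q) = Cand.a := hya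
    rw [hya', keyP, keyP, plP16_a, plP16_b] at hpla
    have hPaW : Pl Cand.a = W Cand.a Cand.c := by
      rw [hPldef, hWdef]
      refine Finset.sum_congr rfl fun i _ => ?_
      rcases hvote i with h | h <;> rw [h] <;> simp
    -- conclude
    refine ⟨Finset.univ.filter fun i => (v i).idxOf Cand.a < (v i).idxOf Cand.c, ?_⟩
    have hWS : W Cand.a Cand.c =
        ∑ i ∈ Finset.univ.filter (fun i => (v i).idxOf Cand.a < (v i).idxOf Cand.c), 2 * k i := by
      rw [hWdef, Finset.sum_filter]
    have : ∑ i ∈ Finset.univ.filter (fun i => (v i).idxOf Cand.a < (v i).idxOf Cand.c), 2 * k i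
        = 2 * ∑ i ∈ Finset.univ.filter (fun i => (v i).idxOf Cand.a < (v i).idxOf Cand.c), k i := by
      rw [Finset.mul_sum]
    omega
  · rintro ⟨S, hS⟩

    set v : Fin t → List Cand := fun i => if i ∈ S then [a,c,b] else [c,a,b] with hv
    refine ⟨v, fun i => by by_cases h : i ∈ S <;> simp [hv, h] <;> exact ⟨by decide, by decide⟩, ?_⟩
    have hsel : ∀ (A B : Fin t → ℕ), (∑ i, if i ∈ S then A i else B i) = ∑ i ∈ S, A i + ∑ i ∈ Sᶜ, B i := by
      intro A B
      rw [← Finset.sum_add_sum_compl S]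
      congr 1
      · exact Finset.sum_congr rfl fun i hi => by simp [hi]
      · exact Finset.sum_congr rfl fun i hi => by simp [Finset.mem_compl.1 hi]
    have hcompl : ∑ i ∈ Sᶜ, k i = K := by
      have := Finset.sum_add_sum_compl S k
      rw [hsum, hS] at this; omega
    have h2S : ∑ i ∈ S, 2 * k i = 2 * K := by rw [← Finset.mul_sum, hS]
    have h2C : ∑ i ∈ Sᶜ, 2 * k i = 2 * K := by rw [← Finset.mul_sum, hcompl]
    set Q : WProfile := P16 K ++ List.ofFn fun i => (v i, 2 * k i) with hQ
    have key : ∀ (x y : Cand), Nw Q x y = Nw (P16 K) x y +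
        ∑ i, if (v i).idxOf x < (v i).idxOf y then 2 * k i else 0 := by
      intro x y; rw [hQ, Nw_append, Nw_ofFn]
    have hac : Nw Q a c = 6 * K := by
      rw [key]
      have : (∑ i, if (v i).idxOf a < (v i).idxOf c then 2 * k i else 0)
          = ∑ i, if i ∈ S then 2 * k i else 0 :=
        Finset.sum_congr rfl fun i _ => by by_cases h : i ∈ S <;> simp [hv, h]
      rw [this, hsel, h2S]
      simp [Nw, P16] <;> omega
    have hca : Nw Q c a = 8 * K := by
      rw [key]
      have : (∑ i, if (v i).idxOf c < (v i).idxOf a then 2 * k i else 0)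
          = ∑ i, if i ∈ S then 0 else 2 * k i :=
        Finset.sum_congr rfl fun i _ => by by_cases h : i ∈ S <;> simp [hv, h]
      rw [this, hsel, h2C]
      simp [Nw, P16] <;> omega
    have hab : Nw Q a b = 8 * K := by
      rw [key]
      have : (∑ i, if (v i).idxOf a < (v i).idxOf b then 2 * k i else 0)
          = ∑ i, if i ∈ S then 2 * k i else 2 * k i :=
        Finset.sum_congr rfl fun i _ => by by_cases h : i ∈ S <;> simp [hv, h]
      rw [this, hsel, h2S, h2C]
      simp [Nw, P16] <;> omega
    have hba : Nw Q b a = 6 * K := by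
      rw [key]
      have : (∑ i, if (v i).idxOf b < (v i).idxOf a then 2 * k i else 0)
          = ∑ i, if i ∈ S then 0 else 0 :=
        Finset.sum_congr rfl fun i _ => by by_cases h : i ∈ S <;> simp [hv, h]
      rw [this, hsel]
      simp [Nw, P16] <;> omega
    have hcb : Nw Q c b = 6 * K := by
      rw [key]
      have : (∑ i, if (v i).idxOf c < (v i).idxOf b then 2 * k i else 0)
          = ∑ i, if i ∈ S then 2 * k i else 2 * k i :=
        Finset.sum_congr rfl fun i _ => by by_cases h : i ∈ S <;> simp [hv, h]
      rw [this, hsel, h2S, h2C]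
      simp [Nw, P16] <;> omega
    have hbc : Nw Q b c = 8 * K := by
      rw [key]
      have : (∑ i, if (v i).idxOf b < (v i).idxOf c then 2 * k i else 0)
          = ∑ i, if i ∈ S then 0 else 0 :=
        Finset.sum_congr rfl fun i _ => by by_cases h : i ∈ S <;> simp [hv, h]
      rw [this, hsel]
      simp [Nw, P16] <;> omega
    have hmm : maximinWinner Tcab Q = Cand.c := by
      apply argmaxT_c
      · rw [maximin_a, maximin_c, hab, hac, hca, hcb]
      · rw [maximin_b, maximin_c, hba, hbc, hca, hcb]; omega
    have hpl : pluralityWinner Tcab Q = Cand.a := by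
      apply argmaxT_a
      · have hpa : pluralityScore Q a = 6 * K := by
          rw [hQ, plur_append, plur_ofFn]
          have : (∑ i, if ((v i, 2 * k i).1).head? = some Cand.a then (v i, 2 * k i).2 else 0)
              = ∑ i, if i ∈ S then 2 * k i else 0 :=
            Finset.sum_congr rfl fun i _ => by by_cases h : i ∈ S <;> simp [hv, h]
          rw [this, hsel, h2S]
          simp [pluralityScore, P16] <;> omega
        have hpb : pluralityScore Q b = 6 * K := by
          rw [hQ, plur_append, plur_ofFn]
          have : (∑ i, if ((v i, 2 * k i).1).head? = some Cand.b then (v i, 2 * k i).2 else 0)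
              = ∑ i, if i ∈ S then 0 else 0 :=
            Finset.sum_congr rfl fun i _ => by by_cases h : i ∈ S <;> simp [hv, h]
          rw [this, hsel]
          simp [pluralityScore, P16] <;> omega
        rw [hpa, hpb]
      · have hpa : pluralityScore Q a = 6 * K := by
          rw [hQ, plur_append, plur_ofFn]
          have : (∑ i, if ((v i, 2 * k i).1).head? = some Cand.a then (v i, 2 * k i).2 else 0)
              = ∑ i, if i ∈ S then 2 * k i else 0 :=
            Finset.sum_congr rfl fun i _ => by by_cases h : i ∈ S <;> simp [hv, h]
          rw [this, hsel, h2S]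
          simp [pluralityScore, P16] <;> omega
        have hpc : pluralityScore Q c = 2 * K := by
          rw [hQ, plur_append, plur_ofFn]
          have : (∑ i, if ((v i, 2 * k i).1).head? = some Cand.c then (v i, 2 * k i).2 else 0)
              = ∑ i, if i ∈ S then 0 else 2 * k i :=
            Finset.sum_congr rfl fun i _ => by by_cases h : i ∈ S <;> simp [hv, h]
          rw [this, hsel, h2C]
          simp [pluralityScore, P16] <;> omega
        rw [hpa, hpc]; omega
    show runoffWinner Tcab (maximinWinner Tcab) (pluralityWinner Tcab) Q = Cand.c
    rw [runoffWinner]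
    simp only [hmm, hpl]
    rw [if_neg (by decide), if_pos (by rw [hac, hca]; omega)]
end
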